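/- Let ε ∈ (0,1) and define h(s) = log((s²+ε)/(1+εs²)) for s ≥ 0. Then for all real numbers 0 ≤ y ≤ x, (x+y)·(h(x) − h(y)) ≤ (4 + 2|log ε|)·(x − y). -/
import Mathlib


/-- For `ε ∈ (0,1)` and `h(s) = log((s²+ε)/(1+εs²))`, for all `0 ≤ y ≤ x`,
`(x+y)(h(x) − h(y)) ≤ (4 + 2|log ε|)(x − y)`. -/
theorem stmt_16 (ε : ℝ) (hε : ε ∈ Set.Ioo (0:ℝ) 1) (x y : ℝ)
    (hy : 0 ≤ y) (hyx : y ≤ x) :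
    (x + y) * (Real.log ((x ^ 2 + ε) / (1 + ε * x ^ 2)) -
        Real.log ((y ^ 2 + ε) / (1 + ε * y ^ 2))) ≤
      (4 + 2 * |Real.log ε|) * (x - y) := by
  obtain ⟨hε0, hε1⟩ := hε
  have hx : 0 ≤ x := hy.trans hyx
  have hA0 : 0 < x ^ 2 + ε := by positivity
  have hA1 : 0 < 1 + ε * x ^ 2 := by positivity
  have hB0 : 0 < y ^ 2 + ε := by positivity
  have hB1 : 0 < 1 + ε * y ^ 2 := by positivity
  have hApos : 0 < (x ^ 2 + ε) / (1 + ε * x ^ 2) := by positivity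
  have hBpos : 0 < (y ^ 2 + ε) / (1 + ε * y ^ 2) := by positivity
  set A := Real.log ((x ^ 2 + ε) / (1 + ε * x ^ 2)) with hA
  set B := Real.log ((y ^ 2 + ε) / (1 + ε * y ^ 2)) with hB
  have habs : |Real.log ε| = -Real.log ε :=
    abs_of_nonpos (Real.log_nonpos hε0.le hε1.le)
  -- upper bound for A
  have hub : A ≤ -Real.log ε := by
    rw [← Real.log_inv]
    apply Real.log_le_log hApos
    rw [div_le_iff₀ hA1, ← one_div, div_mul_eq_mul_div, le_div_iff₀ hε0]
    nlinarith
  -- lower bound for B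
  have hlb : Real.log ε ≤ B := by
    apply Real.log_le_log hε0
    rw [le_div_iff₀ hB1]
    nlinarith [mul_nonneg (sq_nonneg y) (sub_nonneg.2 hε1.le),
      mul_nonneg (sq_nonneg y) (mul_nonneg hε0.le (sub_nonneg.2 hε1.le))]
  have key1 : A - B ≤ 2 * |Real.log ε| := by rw [habs]; linarith
  have key2 : 2 * y * (A - B) ≤ 4 * (x - y) := by
    rcases eq_or_lt_of_le hy with h0 | hy'
    · simp [← h0]; linarith
    · have hx' : 0 < x := lt_of_lt_of_le hy' hyx
      have hDlog : A - B ≤ 2 * Real.log x - 2 * Real.log y := by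
        have h1 : A - B = Real.log (((x ^ 2 + ε) / (1 + ε * x ^ 2)) /
            ((y ^ 2 + ε) / (1 + ε * y ^ 2))) := by
          rw [Real.log_div hApos.ne' hBpos.ne']
        have h2 : 2 * Real.log x - 2 * Real.log y = Real.log (x ^ 2 / y ^ 2) := by
          rw [Real.log_div (by positivity) (by positivity), Real.log_pow,
            Real.log_pow]
          push_cast; ring
        rw [h1, h2]
        apply Real.log_le_log (by positivity)
        rw [div_le_div_iff₀ (by positivity) (by positivity), div_mul_eq_mul_div,
          ← mul_div_assoc, div_le_div_iff₀ hA1 hB1]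
        have hsq : y ^ 2 ≤ x ^ 2 := by nlinarith
        nlinarith [mul_nonneg hε0.le (sub_nonneg.2 hsq),
          mul_nonneg (mul_nonneg hε0.le
            (mul_nonneg (sq_nonneg x) (sq_nonneg y))) (sub_nonneg.2 hsq),
          mul_nonneg (mul_nonneg (mul_nonneg hε0.le hε0.le) (sub_nonneg.2 hsq))
            (by positivity : (0:ℝ) ≤ x ^ 2 + y ^ 2)]
      have hlog : Real.log x - Real.log y ≤ x / y - 1 := by
        rw [← Real.log_div hx'.ne' hy'.ne']
        exact Real.log_le_sub_one_of_pos (by positivity)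
      have h3 := mul_le_mul_of_nonneg_left hlog hy'.le
      have h4 : y * (x / y - 1) = x - y := by field_simp
      nlinarith [mul_le_mul_of_nonneg_left hDlog hy'.le, h3, h4]
  have key3 : (x - y) * (A - B) ≤ (x - y) * (2 * |Real.log ε|) :=
    mul_le_mul_of_nonneg_left key1 (by linarith)
  nlinarith [key2, key3]
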